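/- Suppose the solutions of the boundary-value problems BVP(ε) depend continuously on ε at ε = 0 (i.e., conditions (∗) and (∗∗) of continuous dependence hold). Then condition (I) holds: ‖A(·;ε) − A(·;0)‖_{n−1,∞} → 0 as ε → 0+. -/

import Mathlib

open MeasureTheory Set Filter Topology
open scoped NNReal

attribute [local instance] Matrix.linftyOpNormedAddCommGroup Matrix.linftyOpNormedSpace

noncomputable section

/-- The least Lipschitz constant of `g` on `[a,b]`. -/
def lipConstOn {E : Type*} [NormedAddCommGroup E] (a b : ℝ) (g : ℝ → E) : ℝ :=
  sInf {L : ℝ | 0 ≤ L ∧ ∀ s ∈ Icc a b, ∀ t ∈ Icc a b, ‖g s - g t‖ ≤ L * |s - t|}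

/-- The sup-norm of `g` on `[a,b]`. -/
def supNormOn {E : Type*} [NormedAddCommGroup E] (a b : ℝ) (g : ℝ → E) : ℝ :=
  ⨆ t : Icc a b, ‖g t.1‖

/-- Membership in the Sobolev space `W^k_∞([a,b]; E)`: for `k = 0`, bounded measurable
functions; for `k ≥ 1`, `(k-1)`-times continuously differentiable functions on `[a,b]`
whose `(k-1)`-th derivative is Lipschitz on `[a,b]`. -/
def MemW {E : Type*} [NormedAddCommGroup E] [NormedSpace ℝ E] :
    ℕ → ℝ → ℝ → (ℝ → E) → Prop
  | 0, a, b, g =>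
      AEStronglyMeasurable g (volume.restrict (Icc a b)) ∧
        ∃ C : ℝ, ∀ t ∈ Icc a b, ‖g t‖ ≤ C
  | (k+1), a, b, g =>
      ContDiffOn ℝ k g (Icc a b) ∧
        ∃ K : ℝ≥0, LipschitzOnWith K (iteratedDerivWithin k g (Icc a b)) (Icc a b)

/-- The norm of the Sobolev space `W^k_∞([a,b]; E)`: for `k = 0`, the essential supremum
norm; for `k ≥ 1`, the sum of the sup-norms of the derivatives of order `≤ k-1` plus the
least Lipschitz constant of the `(k-1)`-th derivative. -/
def WNorm {E : Type*} [NormedAddCommGroup E] [NormedSpace ℝ E] :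
    ℕ → ℝ → ℝ → (ℝ → E) → ℝ
  | 0, a, b, g => (eLpNorm g ⊤ (volume.restrict (Icc a b))).toReal
  | (k+1), a, b, g =>
      (∑ j ∈ Finset.range (k+1), supNormOn a b (iteratedDerivWithin j g (Icc a b)))
        + lipConstOn a b (iteratedDerivWithin k g (Icc a b))

set_option linter.unusedSectionVars false
set_option linter.unusedVariables false

section Toolbox
variable {E : Type*} [NormedAddCommGroup E] [NormedSpace ℝ E]
variable {a b : ℝ}

lemma supNormOn_nonneg (g : ℝ → E) : 0 ≤ supNormOn a b g :=
  Real.iSup_nonneg fun _ => norm_nonneg _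

lemma supNormOn_le (hab : a ≤ b) {g : ℝ → E} {C : ℝ}
    (h : ∀ t ∈ Icc a b, ‖g t‖ ≤ C) : supNormOn a b g ≤ C := by
  haveI : Nonempty (Icc a b) := ⟨⟨a, by simp [hab]⟩⟩
  exact ciSup_le fun t => h t.1 t.2

lemma norm_le_supNormOn {g : ℝ → E} (hbdd : ∃ C, ∀ t ∈ Icc a b, ‖g t‖ ≤ C)
    {t : ℝ} (ht : t ∈ Icc a b) : ‖g t‖ ≤ supNormOn a b g := by
  obtain ⟨C, hC⟩ := hbdd
  exact le_ciSup ⟨C, by rintro x ⟨u, rfl⟩; exact hC u.1 u.2⟩ (⟨t, ht⟩ : Icc a b)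

lemma supNormOn_congr {g h : ℝ → E} (he : EqOn g h (Icc a b)) :
    supNormOn a b g = supNormOn a b h := by
  unfold supNormOn
  congr 1; funext t; rw [he t.2]

lemma lipConstOn_nonneg (g : ℝ → E) : 0 ≤ lipConstOn a b g :=
  Real.sInf_nonneg fun _ hL => hL.1

lemma lipConstOn_le {g : ℝ → E} {K : ℝ} (h0 : 0 ≤ K)
    (h : ∀ s ∈ Icc a b, ∀ t ∈ Icc a b, ‖g s - g t‖ ≤ K * |s - t|) :
    lipConstOn a b g ≤ K :=
  csInf_le ⟨0, fun _ hL => hL.1⟩ ⟨h0, h⟩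

lemma lipConstOn_le_of_lip {g : ℝ → E} {K : ℝ≥0} (h : LipschitzOnWith K g (Icc a b)) :
    lipConstOn a b g ≤ K := by
  refine lipConstOn_le K.2 fun s hs t ht => ?_
  have := h.dist_le_mul s hs t ht
  rwa [dist_eq_norm, Real.dist_eq] at this

lemma norm_sub_le_lipConstOn {g : ℝ → E} (hne : ∃ K : ℝ≥0, LipschitzOnWith K g (Icc a b))
    {s t : ℝ} (hs : s ∈ Icc a b) (ht : t ∈ Icc a b) :
    ‖g s - g t‖ ≤ lipConstOn a b g * |s - t| := by
  obtain ⟨K, hK⟩ := hne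
  rcases eq_or_ne s t with rfl | hst
  · simp
  · have habs : (0:ℝ) < |s - t| := by
      rw [abs_pos]; exact sub_ne_zero.mpr hst
    rw [← div_le_iff₀ habs] at *
    have hSne : Set.Nonempty {L : ℝ | 0 ≤ L ∧ ∀ x ∈ Icc a b, ∀ y ∈ Icc a b,
        ‖g x - g y‖ ≤ L * |x - y|} := by
      refine ⟨K, K.2, fun x hx y hy => ?_⟩
      have := hK.dist_le_mul x hx y hy
      rwa [dist_eq_norm, Real.dist_eq] at this
    rw [div_le_iff₀ habs]
    refine (div_le_iff₀ habs).mp (le_csInf hSne fun L hL => (div_le_iff₀ habs).mpr ?_)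
    exact hL.2 s hs t ht

lemma lipschitzOnWith_of_bound {g : ℝ → E} {C : ℝ}
    (h : ∀ x ∈ Icc a b, ∀ y ∈ Icc a b, ‖g x - g y‖ ≤ C * |x - y|) :
    LipschitzOnWith C.toNNReal g (Icc a b) := by
  refine LipschitzOnWith.of_dist_le_mul fun x hx y hy => ?_
  rw [dist_eq_norm, Real.dist_eq]
  exact (h x hx y hy).trans (mul_le_mul_of_nonneg_right (Real.le_coe_toNNReal C) (abs_nonneg _))

lemma lipschitzOnWith_lipConstOn {g : ℝ → E} (hne : ∃ K : ℝ≥0, LipschitzOnWith K g (Icc a b)) :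
    LipschitzOnWith (lipConstOn a b g).toNNReal g (Icc a b) :=
  lipschitzOnWith_of_bound fun x hx y hy => norm_sub_le_lipConstOn hne hx hy

lemma lipConstOn_congr {g h : ℝ → E} (he : EqOn g h (Icc a b)) :
    lipConstOn a b g = lipConstOn a b h := by
  unfold lipConstOn
  congr 1
  ext L
  exact and_congr_right fun _ => by
    constructor <;> intro H s hs t ht
    · rw [← he hs, ← he ht]; exact H s hs t ht
    · rw [he hs, he ht]; exact H s hs t ht

lemma lipschitzOnWith_congr {g h : ℝ → E} {K : ℝ≥0} (hg : LipschitzOnWith K g (Icc a b))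
    (he : EqOn g h (Icc a b)) : LipschitzOnWith K h (Icc a b) := by
  refine LipschitzOnWith.of_dist_le_mul fun x hx y hy => ?_
  rw [← he hx, ← he hy]
  exact hg.dist_le_mul x hx y hy

end Toolbox

section Toolbox2
variable {E : Type*} [NormedAddCommGroup E] [NormedSpace ℝ E]
variable {a b : ℝ}

lemma memW_succ_iff {k : ℕ} {g : ℝ → E} : MemW (k+1) a b g ↔
    ContDiffOn ℝ k g (Icc a b) ∧
      ∃ K : ℝ≥0, LipschitzOnWith K (iteratedDerivWithin k g (Icc a b)) (Icc a b) :=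
  Iff.rfl

lemma wNorm_succ {k : ℕ} {g : ℝ → E} : WNorm (k+1) a b g =
    (∑ j ∈ Finset.range (k+1), supNormOn a b (iteratedDerivWithin j g (Icc a b)))
      + lipConstOn a b (iteratedDerivWithin k g (Icc a b)) := rfl

lemma wNorm_succ_nonneg (k : ℕ) (g : ℝ → E) : 0 ≤ WNorm (k+1) a b g := by
  rw [wNorm_succ]
  exact add_nonneg (Finset.sum_nonneg fun j _ => supNormOn_nonneg _) (lipConstOn_nonneg _)

lemma wNorm_nonneg (k : ℕ) (g : ℝ → E) : 0 ≤ WNorm k a b g := by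
  cases k with
  | zero => exact ENNReal.toReal_nonneg
  | succ k => exact wNorm_succ_nonneg k g

lemma wNorm_one_eq {g : ℝ → E} :
    WNorm 1 a b g = supNormOn a b g + lipConstOn a b g := by
  rw [wNorm_succ, Finset.sum_range_one, iteratedDerivWithin_zero]

section
variable (hab : a < b)
include hab

lemma usIcc : UniqueDiffOn ℝ (Icc a b) := uniqueDiffOn_Icc hab

lemma iD_succ_eqOn (k : ℕ) (g : ℝ → E) :
    EqOn (iteratedDerivWithin (k+1) g (Icc a b))
      (iteratedDerivWithin k (derivWithin g (Icc a b)) (Icc a b)) (Icc a b) :=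
  fun _ _ => by rw [iteratedDerivWithin_succ']

lemma wNorm_congr {k : ℕ} {g h : ℝ → E} (he : EqOn g h (Icc a b)) :
    WNorm (k+1) a b g = WNorm (k+1) a b h := by
  rw [wNorm_succ, wNorm_succ]
  congr 1
  · exact Finset.sum_congr rfl fun j _ =>
      supNormOn_congr (iteratedDerivWithin_congr he)
  · exact lipConstOn_congr (iteratedDerivWithin_congr he)

lemma wNorm_rec (k : ℕ) (g : ℝ → E) :
    WNorm (k+2) a b g = supNormOn a b g
      + WNorm (k+1) a b (derivWithin g (Icc a b)) := by
  rw [wNorm_succ, wNorm_succ, Finset.sum_range_succ' _ (k+1)]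
  rw [iteratedDerivWithin_zero]
  have hsup : ∀ j, supNormOn a b (iteratedDerivWithin (j+1) g (Icc a b)) =
      supNormOn a b (iteratedDerivWithin j (derivWithin g (Icc a b)) (Icc a b)) :=
    fun j => supNormOn_congr (iD_succ_eqOn hab j g)
  have hlip : lipConstOn a b (iteratedDerivWithin (k+1) g (Icc a b)) =
      lipConstOn a b (iteratedDerivWithin k (derivWithin g (Icc a b)) (Icc a b)) :=
    lipConstOn_congr (iD_succ_eqOn hab k g)
  simp only [hsup, hlip]
  ring

lemma bddOn_iD {n : ℕ} {g : ℝ → E} (hg : ContDiffOn ℝ n g (Icc a b)) {j : ℕ} (hj : j ≤ n) :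
    ∃ C, ∀ t ∈ Icc a b, ‖iteratedDerivWithin j g (Icc a b) t‖ ≤ C :=
  isCompact_Icc.exists_bound_of_continuousOn
    (hg.continuousOn_iteratedDerivWithin (by exact_mod_cast hj) (usIcc hab))

lemma norm_le_supNormOn_iD {n : ℕ} {g : ℝ → E} (hg : ContDiffOn ℝ n g (Icc a b)) {j : ℕ}
    (hj : j ≤ n) {t : ℝ} (ht : t ∈ Icc a b) :
    ‖iteratedDerivWithin j g (Icc a b) t‖ ≤ supNormOn a b (iteratedDerivWithin j g (Icc a b)) :=
  norm_le_supNormOn (bddOn_iD hab hg hj) ht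

/-- MVT: the `k`-th derivative of a `C^{k+1}` function is Lipschitz with constant the sup norm
of the `(k+1)`-st derivative. -/
lemma lip_iD_bound {k : ℕ} {g : ℝ → E} (hg : ContDiffOn ℝ (k+1) g (Icc a b)) :
    ∀ x ∈ Icc a b, ∀ y ∈ Icc a b,
      ‖iteratedDerivWithin k g (Icc a b) x - iteratedDerivWithin k g (Icc a b) y‖ ≤
        supNormOn a b (iteratedDerivWithin (k+1) g (Icc a b)) * |x - y| := by
  intro x hx y hy
  have hdiff : DifferentiableOn ℝ (iteratedDerivWithin k g (Icc a b)) (Icc a b) :=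
    hg.differentiableOn_iteratedDerivWithin (by exact_mod_cast Nat.lt_succ_self k) (usIcc hab)
  have := Convex.norm_image_sub_le_of_norm_derivWithin_le (f := iteratedDerivWithin k g (Icc a b))
    (C := supNormOn a b (iteratedDerivWithin (k+1) g (Icc a b))) hdiff ?_ (convex_Icc a b) hy hx
  · rwa [Real.norm_eq_abs] at this
  · intro z hz
    rw [← iteratedDerivWithin_succ] at *
    exact norm_le_supNormOn_iD hab hg (le_refl _) hz

lemma memW_of_succ {k : ℕ} {g : ℝ → E} (hg : MemW (k+2) a b g) : MemW (k+1) a b g := by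
  obtain ⟨hsm, _, _⟩ := hg
  refine ⟨hsm.of_le (by exact_mod_cast Nat.le_succ k), ?_⟩
  exact ⟨_, lipschitzOnWith_of_bound
    (C := supNormOn a b (iteratedDerivWithin (k+1) g (Icc a b)))
    fun x hx y hy => lip_iD_bound hab hsm x hx y hy⟩

lemma wNorm_mono {k : ℕ} {g : ℝ → E} (hg : MemW (k+2) a b g) :
    WNorm (k+1) a b g ≤ WNorm (k+2) a b g := by
  rw [wNorm_succ, wNorm_succ, Finset.sum_range_succ _ (k+1)]
  have h1 : lipConstOn a b (iteratedDerivWithin k g (Icc a b)) ≤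
      supNormOn a b (iteratedDerivWithin (k+1) g (Icc a b)) :=
    lipConstOn_le (supNormOn_nonneg _) (lip_iD_bound hab hg.1)
  have h2 : 0 ≤ lipConstOn a b (iteratedDerivWithin (k+1) g (Icc a b)) := lipConstOn_nonneg _
  linarith

lemma memW_derivWithin {k : ℕ} {g : ℝ → E} (hg : MemW (k+2) a b g) :
    MemW (k+1) a b (derivWithin g (Icc a b)) := by
  obtain ⟨hsm, K, hK⟩ := hg
  refine ⟨hsm.derivWithin (usIcc hab) (by exact_mod_cast le_refl (k+1)), ⟨K, ?_⟩⟩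
  exact lipschitzOnWith_congr hK (iD_succ_eqOn hab k g)

lemma wNorm_derivWithin_le {k : ℕ} {g : ℝ → E} :
    WNorm (k+1) a b (derivWithin g (Icc a b)) ≤ WNorm (k+2) a b g := by
  rw [wNorm_rec hab]
  have := supNormOn_nonneg (a := a) (b := b) g
  linarith

end
end Toolbox2

section Toolbox3
variable {E : Type*} [NormedAddCommGroup E] [NormedSpace ℝ E]
variable {F : Type*} [NormedAddCommGroup F] [NormedSpace ℝ F]
variable {a b : ℝ} (hab : a < b)
include hab

lemma iD_const_eqOn (c : E) {j : ℕ} (hj : 1 ≤ j) :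
    EqOn (iteratedDerivWithin j (fun _ => c) (Icc a b)) (fun _ => (0:E)) (Icc a b) := by
  induction j with
  | zero => omega
  | succ j IH =>
    rcases Nat.eq_or_lt_of_le hj with h1 | h1
    · intro x hx
      rw [← h1]
      rw [iteratedDerivWithin_one]
      exact (hasDerivWithinAt_const x (Icc a b) c).derivWithin (usIcc hab x hx)
    · intro x hx
      have hj' : 1 ≤ j := by omega
      rw [iteratedDerivWithin_succ]
      have : derivWithin (iteratedDerivWithin j (fun _ => c) (Icc a b)) (Icc a b) x =
          derivWithin (fun _ => (0:E)) (Icc a b) x :=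
        derivWithin_congr (IH hj') (IH hj' hx)
      rw [this]
      exact (hasDerivWithinAt_const x (Icc a b) (0:E)).derivWithin (usIcc hab x hx)

lemma memW_const (k : ℕ) (c : E) : MemW (k+1) a b (fun _ => c) := by
  refine ⟨contDiffOn_const, ⟨0, ?_⟩⟩
  cases k with
  | zero =>
    rw [iteratedDerivWithin_zero]
    exact (LipschitzWith.const' c).lipschitzOnWith
  | succ k =>
    refine lipschitzOnWith_congr ((LipschitzWith.const' (0:E)).lipschitzOnWith) ?_
    exact fun x hx => (iD_const_eqOn hab c (by omega) hx).symm

lemma supNormOn_zero : supNormOn a b (fun _ => (0:E)) = 0 := by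
  apply le_antisymm
  · exact supNormOn_le hab.le fun t _ => by simp
  · exact supNormOn_nonneg _

lemma wNorm_zero_eq (k : ℕ) : WNorm k a b (fun _ => (0:E)) = 0 := by
  cases k with
  | zero =>
    show (eLpNorm (0 : ℝ → E) ⊤ (volume.restrict (Icc a b))).toReal = 0
    simp
  | succ k =>
    rw [wNorm_succ]
    have hsup : ∀ j ∈ Finset.range (k+1),
        supNormOn a b (iteratedDerivWithin j (fun _ => (0:E)) (Icc a b)) = 0 := by
      intro j _
      rcases Nat.eq_zero_or_pos j with rfl | hj
      · rw [iteratedDerivWithin_zero]; exact supNormOn_zero hab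
      · rw [supNormOn_congr (iD_const_eqOn hab 0 hj)]; exact supNormOn_zero hab
    rw [Finset.sum_eq_zero hsup]
    have hlip : lipConstOn a b (iteratedDerivWithin k (fun _ => (0:E)) (Icc a b)) = 0 := by
      apply le_antisymm _ (lipConstOn_nonneg _)
      apply lipConstOn_le le_rfl
      intro x hx y hy
      rcases Nat.eq_zero_or_pos k with rfl | hk
      · simp [iteratedDerivWithin_zero]
      · rw [iD_const_eqOn hab 0 hk hx, iD_const_eqOn hab 0 hk hy]; simp
    rw [hlip]; ring

lemma iD_add_eqOn {k j : ℕ} {g h : ℝ → E} (hj : j ≤ k)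
    (hg : ContDiffOn ℝ k g (Icc a b)) (hh : ContDiffOn ℝ k h (Icc a b)) :
    EqOn (iteratedDerivWithin j (fun t => g t + h t) (Icc a b))
      (fun t => iteratedDerivWithin j g (Icc a b) t + iteratedDerivWithin j h (Icc a b) t)
      (Icc a b) := by
  intro x hx
  have hg' : ContDiffOn ℝ j g (Icc a b) := hg.of_le (by exact_mod_cast hj)
  have hh' : ContDiffOn ℝ j h (Icc a b) := hh.of_le (by exact_mod_cast hj)
  exact iteratedDerivWithin_add hx (usIcc hab) (hg' x hx) (hh' x hx)

lemma memW_add {k : ℕ} {g h : ℝ → E} (hg : MemW (k+1) a b g) (hh : MemW (k+1) a b h) :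
    MemW (k+1) a b (fun t => g t + h t) := by
  obtain ⟨hg1, Kg, hg2⟩ := hg
  obtain ⟨hh1, Kh, hh2⟩ := hh
  refine ⟨hg1.add hh1, ⟨Kg + Kh, ?_⟩⟩
  refine lipschitzOnWith_congr ?_ fun x hx => (iD_add_eqOn hab le_rfl hg1 hh1 hx).symm
  exact hg2.add hh2

lemma wNorm_add_le {k : ℕ} {g h : ℝ → E} (hg : MemW (k+1) a b g) (hh : MemW (k+1) a b h) :
    WNorm (k+1) a b (fun t => g t + h t) ≤ WNorm (k+1) a b g + WNorm (k+1) a b h := by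
  obtain ⟨hg1, hgK⟩ := hg
  obtain ⟨hh1, hhK⟩ := hh
  rw [wNorm_succ, wNorm_succ, wNorm_succ]
  have hsum : ∀ j ∈ Finset.range (k+1),
      supNormOn a b (iteratedDerivWithin j (fun t => g t + h t) (Icc a b)) ≤
        supNormOn a b (iteratedDerivWithin j g (Icc a b)) +
        supNormOn a b (iteratedDerivWithin j h (Icc a b)) := by
    intro j hj
    have hj' : j ≤ k := by simpa [Nat.lt_succ_iff] using hj
    rw [supNormOn_congr (iD_add_eqOn hab hj' hg1 hh1)]
    refine supNormOn_le hab.le fun t ht => (norm_add_le _ _).trans (add_le_add ?_ ?_)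
    · exact norm_le_supNormOn_iD hab hg1 hj' ht
    · exact norm_le_supNormOn_iD hab hh1 hj' ht
  have hlip : lipConstOn a b (iteratedDerivWithin k (fun t => g t + h t) (Icc a b)) ≤
      lipConstOn a b (iteratedDerivWithin k g (Icc a b)) +
      lipConstOn a b (iteratedDerivWithin k h (Icc a b)) := by
    rw [lipConstOn_congr (iD_add_eqOn hab le_rfl hg1 hh1)]
    refine lipConstOn_le (add_nonneg (lipConstOn_nonneg _) (lipConstOn_nonneg _))
      fun x hx y hy => ?_
    calc ‖_ - _‖ ≤ ‖iteratedDerivWithin k g (Icc a b) x - iteratedDerivWithin k g (Icc a b) y‖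
          + ‖iteratedDerivWithin k h (Icc a b) x - iteratedDerivWithin k h (Icc a b) y‖ := by
            rw [show (iteratedDerivWithin k g (Icc a b) x + iteratedDerivWithin k h (Icc a b) x)
              - (iteratedDerivWithin k g (Icc a b) y + iteratedDerivWithin k h (Icc a b) y)
              = (iteratedDerivWithin k g (Icc a b) x - iteratedDerivWithin k g (Icc a b) y)
              + (iteratedDerivWithin k h (Icc a b) x - iteratedDerivWithin k h (Icc a b) y) by abel]
            exact norm_add_le _ _
      _ ≤ lipConstOn a b (iteratedDerivWithin k g (Icc a b)) * |x - y|
          + lipConstOn a b (iteratedDerivWithin k h (Icc a b)) * |x - y| :=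
            add_le_add (norm_sub_le_lipConstOn hgK hx hy) (norm_sub_le_lipConstOn hhK hx hy)
      _ = _ := by ring
  calc _ ≤ (∑ j ∈ Finset.range (k+1), (supNormOn a b (iteratedDerivWithin j g (Icc a b)) +
        supNormOn a b (iteratedDerivWithin j h (Icc a b))))
      + (lipConstOn a b (iteratedDerivWithin k g (Icc a b)) +
         lipConstOn a b (iteratedDerivWithin k h (Icc a b))) :=
        add_le_add (Finset.sum_le_sum hsum) hlip
    _ = _ := by rw [Finset.sum_add_distrib]; ring

lemma iD_neg_eqOn {j : ℕ} {g : ℝ → E} :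
    EqOn (iteratedDerivWithin j (fun t => -(g t)) (Icc a b))
      (fun t => -(iteratedDerivWithin j g (Icc a b) t)) (Icc a b) :=
  fun x hx => iteratedDerivWithin_neg (n := j) (s := Icc a b) (x := x) g

lemma memW_neg {k : ℕ} {g : ℝ → E} (hg : MemW (k+1) a b g) :
    MemW (k+1) a b (fun t => -(g t)) := by
  obtain ⟨hg1, Kg, hg2⟩ := hg
  refine ⟨hg1.neg, ⟨Kg, ?_⟩⟩
  refine lipschitzOnWith_congr ?_ fun x hx => (iD_neg_eqOn hab hx).symm
  exact LipschitzOnWith.of_dist_le_mul fun x hx y hy => by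
    simpa only [dist_neg_neg] using hg2.dist_le_mul x hx y hy

lemma wNorm_neg {k : ℕ} {g : ℝ → E} : WNorm (k+1) a b (fun t => -(g t)) = WNorm (k+1) a b g := by
  rw [wNorm_succ, wNorm_succ]
  congr 1
  · refine Finset.sum_congr rfl fun j _ => ?_
    rw [supNormOn_congr (iD_neg_eqOn hab)]
    unfold supNormOn
    congr 1; funext t; rw [norm_neg]
  · rw [lipConstOn_congr (iD_neg_eqOn hab)]
    unfold lipConstOn
    congr 1; ext L
    refine and_congr_right fun _ => ?_
    constructor <;> intro H x hx y hy
    · have := H x hx y hy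
      rwa [neg_sub_neg, norm_sub_rev] at this
    · have := H x hx y hy
      rwa [← norm_sub_rev, ← neg_sub_neg] at this

lemma memW_sub {k : ℕ} {g h : ℝ → E} (hg : MemW (k+1) a b g) (hh : MemW (k+1) a b h) :
    MemW (k+1) a b (fun t => g t - h t) := by
  simpa [sub_eq_add_neg] using memW_add hab hg (memW_neg hab hh)

lemma wNorm_sub_le {k : ℕ} {g h : ℝ → E} (hg : MemW (k+1) a b g) (hh : MemW (k+1) a b h) :
    WNorm (k+1) a b (fun t => g t - h t) ≤ WNorm (k+1) a b g + WNorm (k+1) a b h := by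
  have := wNorm_add_le hab hg (memW_neg hab hh)
  rw [wNorm_neg hab] at this
  simpa [sub_eq_add_neg] using this

end Toolbox3

section Toolbox4
variable {E : Type*} [NormedAddCommGroup E] [NormedSpace ℝ E]
variable {F : Type*} [NormedAddCommGroup F] [NormedSpace ℝ F]
variable {a b : ℝ} (hab : a < b)
include hab

lemma iD_clm_eqOn (T : E →L[ℝ] F) {k j : ℕ} {g : ℝ → E} (hj : j ≤ k)
    (hg : ContDiffOn ℝ k g (Icc a b)) :
    EqOn (iteratedDerivWithin j (fun t => T (g t)) (Icc a b))
      (fun t => T (iteratedDerivWithin j g (Icc a b) t)) (Icc a b) := by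
  intro x hx
  have h1 : iteratedFDerivWithin ℝ j (T ∘ g) (Icc a b) x =
      T.compContinuousMultilinearMap (iteratedFDerivWithin ℝ j g (Icc a b) x) :=
    T.iteratedFDerivWithin_comp_left (hg x hx) (usIcc hab) hx (by exact_mod_cast hj)
  have h2 : iteratedDerivWithin j (fun t => T (g t)) (Icc a b) x =
      (iteratedFDerivWithin ℝ j (T ∘ g) (Icc a b) x : (Fin j → ℝ) → F) (fun _ => 1) :=
    iteratedDerivWithin_eq_iteratedFDerivWithin
  rw [h2, h1]
  rfl

lemma memW_clm (T : E →L[ℝ] F) {k : ℕ} {g : ℝ → E} (hg : MemW (k+1) a b g) :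
    MemW (k+1) a b (fun t => T (g t)) := by
  obtain ⟨hg1, K, hK⟩ := hg
  refine ⟨T.contDiff.comp_contDiffOn hg1, ⟨‖T‖₊ * K, ?_⟩⟩
  refine lipschitzOnWith_congr ?_ fun x hx => (iD_clm_eqOn hab T le_rfl hg1 hx).symm
  exact (T.lipschitz.comp_lipschitzOnWith hK)

lemma wNorm_clm_le (T : E →L[ℝ] F) {k : ℕ} {g : ℝ → E} (hg : MemW (k+1) a b g) :
    WNorm (k+1) a b (fun t => T (g t)) ≤ ‖T‖ * WNorm (k+1) a b g := by
  obtain ⟨hg1, hK⟩ := hg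
  rw [wNorm_succ, wNorm_succ, mul_add, Finset.mul_sum]
  refine add_le_add (Finset.sum_le_sum fun j hj => ?_) ?_
  · have hj' : j ≤ k := by simpa [Nat.lt_succ_iff] using hj
    rw [supNormOn_congr (iD_clm_eqOn hab T hj' hg1)]
    refine supNormOn_le hab.le fun t ht => ?_
    exact (T.le_opNorm _).trans (mul_le_mul_of_nonneg_left
      (norm_le_supNormOn_iD hab hg1 hj' ht) (norm_nonneg T))
  · rw [lipConstOn_congr (iD_clm_eqOn hab T le_rfl hg1)]
    refine lipConstOn_le (mul_nonneg (norm_nonneg _) (lipConstOn_nonneg _)) fun x hx y hy => ?_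
    calc ‖T (iteratedDerivWithin k g (Icc a b) x) - T (iteratedDerivWithin k g (Icc a b) y)‖
        = ‖T (iteratedDerivWithin k g (Icc a b) x - iteratedDerivWithin k g (Icc a b) y)‖ := by
          rw [map_sub]
      _ ≤ ‖T‖ * ‖iteratedDerivWithin k g (Icc a b) x - iteratedDerivWithin k g (Icc a b) y‖ :=
          T.le_opNorm _
      _ ≤ ‖T‖ * (lipConstOn a b (iteratedDerivWithin k g (Icc a b)) * |x - y|) :=
          mul_le_mul_of_nonneg_left (norm_sub_le_lipConstOn hK hx hy) (norm_nonneg T)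
      _ = _ := by ring

lemma memW_fsum {ι : Type*} (s : Finset ι) (φ : ι → ℝ → E) {k : ℕ}
    (h : ∀ i ∈ s, MemW (k+1) a b (φ i)) :
    MemW (k+1) a b (fun t => ∑ i ∈ s, φ i t) := by
  induction s using Finset.cons_induction_on with
  | empty => simpa using memW_const hab k (0:E)
  | cons _ _ ha IH =>
    simp only [Finset.sum_cons]
    exact memW_add hab (h _ (Finset.mem_cons_self _ _))
      (IH fun i hi => h i (Finset.mem_cons_of_mem hi))

lemma wNorm_fsum_le {ι : Type*} (s : Finset ι) (φ : ι → ℝ → E) {k : ℕ}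
    (h : ∀ i ∈ s, MemW (k+1) a b (φ i)) :
    WNorm (k+1) a b (fun t => ∑ i ∈ s, φ i t) ≤ ∑ i ∈ s, WNorm (k+1) a b (φ i) := by
  induction s using Finset.cons_induction_on with
  | empty => simpa using le_of_eq (wNorm_zero_eq hab (k+1))
  | cons _ _ ha IH =>
    simp only [Finset.sum_cons]
    calc WNorm (k+1) a b (fun t => φ _ t + ∑ i ∈ _, φ i t)
        ≤ WNorm (k+1) a b (φ _) + WNorm (k+1) a b (fun t => ∑ i ∈ _, φ i t) :=
          wNorm_add_le hab (h _ (Finset.mem_cons_self _ _))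
            (memW_fsum hab _ _ fun i hi => h i (Finset.mem_cons_of_mem hi))
      _ ≤ _ := by
          exact add_le_add_right (IH fun i hi => h i (Finset.mem_cons_of_mem hi)) _

end Toolbox4

section Toolbox5
variable {R : Type*} [NormedRing R] [NormedAlgebra ℝ R]
variable {a b : ℝ} (hab : a < b)
include hab

lemma memW_mul_wNorm : ∀ k : ℕ, ∀ {g h : ℝ → R}, MemW (k+1) a b g → MemW (k+1) a b h →
    MemW (k+1) a b (fun t => g t * h t) ∧
    WNorm (k+1) a b (fun t => g t * h t) ≤
      2^k * (WNorm (k+1) a b g * WNorm (k+1) a b h) := by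
  intro k
  induction k with
  | zero =>
    intro g h hg hh
    obtain ⟨hg1, Kg, hKg⟩ := hg
    obtain ⟨hh1, Kh, hKh⟩ := hh
    rw [iteratedDerivWithin_zero] at hKg hKh
    have hgc : ContinuousOn g (Icc a b) := by rw [← contDiffOn_zero (𝕜 := ℝ)]; exact_mod_cast hg1
    have hhc : ContinuousOn h (Icc a b) := by rw [← contDiffOn_zero (𝕜 := ℝ)]; exact_mod_cast hh1
    have hgb : ∃ C, ∀ t ∈ Icc a b, ‖g t‖ ≤ C := isCompact_Icc.exists_bound_of_continuousOn hgc
    have hhb : ∃ C, ∀ t ∈ Icc a b, ‖h t‖ ≤ C := isCompact_Icc.exists_bound_of_continuousOn hhc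
    set Sg := supNormOn a b g with hSg
    set Sh := supNormOn a b h with hSh
    set Lg := lipConstOn a b g with hLg
    set Lh := lipConstOn a b h with hLh
    have hSg0 : 0 ≤ Sg := supNormOn_nonneg g
    have hSh0 : 0 ≤ Sh := supNormOn_nonneg h
    have hLg0 : 0 ≤ Lg := lipConstOn_nonneg g
    have hLh0 : 0 ≤ Lh := lipConstOn_nonneg h
    have key : ∀ x ∈ Icc a b, ∀ y ∈ Icc a b,
        ‖g x * h x - g y * h y‖ ≤ (Sg * Lh + Lg * Sh) * |x - y| := by
      intro x hx y hy
      calc ‖g x * h x - g y * h y‖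
          = ‖g x * (h x - h y) + (g x - g y) * h y‖ := by noncomm_ring
        _ ≤ ‖g x * (h x - h y)‖ + ‖(g x - g y) * h y‖ := norm_add_le _ _
        _ ≤ ‖g x‖ * ‖h x - h y‖ + ‖g x - g y‖ * ‖h y‖ :=
            add_le_add (norm_mul_le _ _) (norm_mul_le _ _)
        _ ≤ Sg * (Lh * |x - y|) + (Lg * |x - y|) * Sh := by
            refine add_le_add (mul_le_mul (norm_le_supNormOn hgb hx)
              (norm_sub_le_lipConstOn ⟨Kh, hKh⟩ hx hy) (norm_nonneg _) hSg0) ?_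
            exact mul_le_mul (norm_sub_le_lipConstOn ⟨Kg, hKg⟩ hx hy)
              (norm_le_supNormOn hhb hy) (norm_nonneg _)
              (by positivity)
        _ = (Sg * Lh + Lg * Sh) * |x - y| := by ring
    constructor
    · refine ⟨contDiffOn_zero.mpr (hgc.mul hhc), ⟨(Sg * Lh + Lg * Sh).toNNReal, ?_⟩⟩
      rw [iteratedDerivWithin_zero]
      exact lipschitzOnWith_of_bound key
    · rw [wNorm_one_eq, wNorm_one_eq, wNorm_one_eq]
      have h1 : supNormOn a b (fun t => g t * h t) ≤ Sg * Sh := by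
        refine supNormOn_le hab.le fun t ht => (norm_mul_le _ _).trans ?_
        exact mul_le_mul (norm_le_supNormOn hgb ht) (norm_le_supNormOn hhb ht)
          (norm_nonneg _) hSg0
      have h2 : lipConstOn a b (fun t => g t * h t) ≤ Sg * Lh + Lg * Sh :=
        lipConstOn_le (by positivity) key
      rw [pow_zero, one_mul]
      nlinarith [mul_nonneg hLg0 hLh0]
  | succ k IH =>
    intro g h hg hh
    have hg' := memW_derivWithin hab hg
    have hh' := memW_derivWithin hab hh
    have hgm := memW_of_succ hab hg
    have hhm := memW_of_succ hab hh
    obtain ⟨P1mem, P1bd⟩ := IH hg' hhm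
    obtain ⟨P2mem, P2bd⟩ := IH hgm hh'
    have hgd : DifferentiableOn ℝ g (Icc a b) :=
      hg.1.differentiableOn (by simp)
    have hhd : DifferentiableOn ℝ h (Icc a b) :=
      hh.1.differentiableOn (by simp)
    have hderivEq : EqOn (derivWithin (fun t => g t * h t) (Icc a b))
        (fun t => derivWithin g (Icc a b) t * h t + g t * derivWithin h (Icc a b) t)
        (Icc a b) := fun x hx =>
      derivWithin_fun_mul (hgd x hx) (hhd x hx)
    have memSum := memW_add hab P1mem P2mem
    constructor
    · refine ⟨hg.1.mul hh.1, ?_⟩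
      obtain ⟨K, hK⟩ := memSum.2
      refine ⟨K, lipschitzOnWith_congr hK ?_⟩
      intro x hx
      rw [iteratedDerivWithin_succ']
      exact (iteratedDerivWithin_congr hderivEq hx).symm
    · rw [wNorm_rec hab, wNorm_rec hab, wNorm_rec hab]
      have e1 : WNorm (k+1) a b (derivWithin (fun t => g t * h t) (Icc a b)) =
          WNorm (k+1) a b (fun t => derivWithin g (Icc a b) t * h t
            + g t * derivWithin h (Icc a b) t) := wNorm_congr hab hderivEq
      rw [e1]
      have hadd := wNorm_add_le hab P1mem P2mem
      set Sg := supNormOn a b g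
      set Sh := supNormOn a b h
      set Wg' := WNorm (k+1) a b (derivWithin g (Icc a b))
      set Wh' := WNorm (k+1) a b (derivWithin h (Icc a b))
      set Wg := WNorm (k+1) a b g
      set Wh := WNorm (k+1) a b h
      have hWg : Wg ≤ Sg + Wg' := by
        have := wNorm_mono hab hg
        rwa [wNorm_rec hab] at this
      have hWh : Wh ≤ Sh + Wh' := by
        have := wNorm_mono hab hh
        rwa [wNorm_rec hab] at this
      have hgb : ∃ C, ∀ t ∈ Icc a b, ‖g t‖ ≤ C :=
        isCompact_Icc.exists_bound_of_continuousOn hg.1.continuousOn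
      have hhb : ∃ C, ∀ t ∈ Icc a b, ‖h t‖ ≤ C :=
        isCompact_Icc.exists_bound_of_continuousOn hh.1.continuousOn
      have hsup : supNormOn a b (fun t => g t * h t) ≤ Sg * Sh := by
        refine supNormOn_le hab.le fun t ht => (norm_mul_le _ _).trans ?_
        exact mul_le_mul (norm_le_supNormOn hgb ht) (norm_le_supNormOn hhb ht)
          (norm_nonneg _) (supNormOn_nonneg g)
      have h2k : (1:ℝ) ≤ 2^k := one_le_pow₀ one_le_two
      have hSg0 : 0 ≤ Sg := supNormOn_nonneg g
      have hSh0 : 0 ≤ Sh := supNormOn_nonneg h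
      have hWg'0 : 0 ≤ Wg' := wNorm_succ_nonneg _ _
      have hWh'0 : 0 ≤ Wh' := wNorm_succ_nonneg _ _
      have hWg0 : 0 ≤ Wg := wNorm_succ_nonneg _ _
      have hWh0 : 0 ≤ Wh := wNorm_succ_nonneg _ _
      have hP1 : WNorm (k+1) a b (fun t => derivWithin g (Icc a b) t * h t) ≤
          2^k * (Wg' * Wh) := P1bd
      have hP2 : WNorm (k+1) a b (fun t => g t * derivWithin h (Icc a b) t) ≤
          2^k * (Wg * Wh') := P2bd
      have hpow : (2:ℝ)^(k+1) = 2 * 2^k := by ring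
      rw [hpow]
      have p0 : (0:ℝ) ≤ 2^k := by positivity
      have b1 : Wg' * Wh ≤ Wg' * Sh + Wg' * Wh' := by nlinarith [mul_le_mul_of_nonneg_left hWh hWg'0]
      have b2 : Wg * Wh' ≤ Sg * Wh' + Wg' * Wh' := by nlinarith [mul_le_mul_of_nonneg_right hWg hWh'0]
      have hb1 : 2^k * (Wg' * Wh) ≤ 2^k * (Wg' * Sh + Wg' * Wh') :=
        mul_le_mul_of_nonneg_left b1 p0
      have hb2 : 2^k * (Wg * Wh') ≤ 2^k * (Sg * Wh' + Wg' * Wh') :=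
        mul_le_mul_of_nonneg_left b2 p0
      have hq : Sg * Sh ≤ 2^k * (Sg * Sh) :=
        le_mul_of_one_le_left (mul_nonneg hSg0 hSh0) h2k
      have hm2 : 0 ≤ 2^k * (Sg * Wh') := by positivity
      have hm3 : 0 ≤ 2^k * (Wg' * Sh) := by positivity
      nlinarith [hb1, hb2, hq, hm2, hm3, hsup, hadd, hP1, hP2]
  
end Toolbox5

section Toolbox6
variable {E : Type*} [NormedAddCommGroup E] [NormedSpace ℝ E]
variable {a b : ℝ} (hab : a < b)
include hab

/-- Two functions continuous on `[a,b]` that agree a.e. on `[a,b]` agree on `[a,b]`. -/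
lemma eqOn_of_ae_eq {g h : ℝ → E} (hg : ContinuousOn g (Icc a b)) (hh : ContinuousOn h (Icc a b))
    (hae : ∀ᵐ t ∂(volume.restrict (Icc a b)), g t = h t) : EqOn g h (Icc a b) := by
  intro t0 ht0
  by_contra hne
  have hc : ContinuousWithinAt (fun t => ‖g t - h t‖) (Icc a b) t0 :=
    ((hg.sub hh).norm) t0 ht0
  have hpos : 0 < ‖g t0 - h t0‖ := by
    rw [norm_pos_iff, sub_ne_zero]; exact hne
  have hev : (fun t => ‖g t - h t‖) ⁻¹' (Ioi 0) ∈ 𝓝[Icc a b] t0 := hc (Ioi_mem_nhds hpos)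
  obtain ⟨δ, hδ, hball⟩ := Metric.mem_nhdsWithin_iff.mp hev
  set S := Ioo (max a (t0 - δ)) (min b (t0 + δ)) with hS
  have hSsub : S ⊆ Icc a b := fun x hx =>
    ⟨le_of_lt (lt_of_le_of_lt (le_max_left _ _) hx.1),
     le_of_lt (lt_of_lt_of_le hx.2 (min_le_left _ _))⟩
  have hSball : S ⊆ Metric.ball t0 δ := by
    intro x hx
    rw [Metric.mem_ball, Real.dist_eq, abs_lt]
    constructor
    · have := lt_of_le_of_lt (le_max_right _ _) hx.1; linarith
    · have := lt_of_lt_of_le hx.2 (min_le_right _ _); linarith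
  have hSN : S ⊆ {t | ¬ (g t = h t)} := by
    intro x hx
    have : x ∈ (fun t => ‖g t - h t‖) ⁻¹' (Ioi 0) := hball ⟨hSball hx, hSsub hx⟩
    simp only [mem_preimage, mem_Ioi] at this
    intro hgx
    rw [hgx, sub_self, norm_zero] at this
    exact lt_irrefl 0 this
  have hmz : (volume.restrict (Icc a b)) {t | ¬ (g t = h t)} = 0 := by
    rw [← ae_iff] at *
    exact hae
  have hSz : (volume.restrict (Icc a b)) S = 0 := measure_mono_null hSN hmz
  rw [Measure.restrict_apply measurableSet_Ioo, inter_eq_self_of_subset_left hSsub] at hSz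
  have hSpos : 0 < volume S := by
    rw [hS, Real.volume_Ioo]
    apply ENNReal.ofReal_pos.mpr
    have h1 : max a (t0 - δ) < min b (t0 + δ) := by
      rcases ht0 with ⟨h2, h3⟩
      rw [max_lt_iff, lt_min_iff, lt_min_iff]
      refine ⟨⟨hab, by linarith⟩, ⟨by linarith, by linarith⟩⟩
    linarith
  rw [hSz] at hSpos
  exact lt_irrefl 0 hSpos

/-- The derivative within `[a,b]` of a function satisfying a Lipschitz-type bound is bounded
by the Lipschitz constant. -/
lemma norm_deriv_le_of_lipBound {g : ℝ → E} {d : E} {t : ℝ} {Λ : ℝ} (ht : t ∈ Icc a b)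
    (hd : HasDerivWithinAt g d (Icc a b) t)
    (hlip : ∀ x ∈ Icc a b, ∀ y ∈ Icc a b, ‖g x - g y‖ ≤ Λ * |x - y|) : ‖d‖ ≤ Λ := by
  rw [hasDerivWithinAt_iff_tendsto_slope] at hd
  have hne : (𝓝[Icc a b \ {t}] t).NeBot := by
    rcases lt_or_ge t b with h | h
    · have h1 : (𝓝[Ioo t b] t).NeBot := left_nhdsWithin_Ioo_neBot h
      have hsub : Ioo t b ⊆ Icc a b \ {t} := fun x hx =>
        ⟨⟨le_trans ht.1 (le_of_lt hx.1), le_of_lt hx.2⟩, ne_of_gt hx.1⟩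
      exact Filter.neBot_of_le (f := 𝓝[Ioo t b] t) (nhdsWithin_mono t hsub)
    · have hbt : t = b := le_antisymm ht.2 h
      have hat : a < t := hbt ▸ hab
      have h1 : (𝓝[Ioo a t] t).NeBot := right_nhdsWithin_Ioo_neBot hat
      have hsub : Ioo a t ⊆ Icc a b \ {t} := fun x hx =>
        ⟨⟨le_of_lt hx.1, le_trans (le_of_lt hx.2) ht.2⟩, ne_of_lt hx.2⟩
      exact Filter.neBot_of_le (f := 𝓝[Ioo a t] t) (nhdsWithin_mono t hsub)
  refine le_of_tendsto hd.norm (eventually_nhdsWithin_of_forall fun y hy => ?_)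
  have hyt : y ≠ t := hy.2
  have h1 : ‖slope g t y‖ = |y - t|⁻¹ * ‖g y - g t‖ := by
    rw [slope_def_module, norm_smul, norm_inv, Real.norm_eq_abs]
  rw [h1]
  have habs : (0:ℝ) < |y - t| := by rw [abs_pos]; exact sub_ne_zero.mpr hyt
  rw [inv_mul_le_iff₀ habs]
  calc ‖g y - g t‖ ≤ Λ * |y - t| := hlip y hy.1 t ht
    _ = |y - t| * Λ := by ring

end Toolbox6

section MatrixTools
variable {m : ℕ}

attribute [local instance] Matrix.linftyOpNormedRing Matrix.linftyOpNormedAlgebra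

/-- The continuous linear map sending a vector `v` to the matrix whose `j`-th column is `v`
and whose other columns vanish. -/
def colCLM (m : ℕ) (j : Fin m) : (Fin m → ℂ) →L[ℝ] Matrix (Fin m) (Fin m) ℂ :=
  LinearMap.toContinuousLinearMap
    { toFun := fun v => Matrix.of fun i j' => if j' = j then v i else 0
      map_add' := by
        intro v w
        ext i j'
        by_cases h : j' = j <;> simp [h]
      map_smul' := by
        intro r v
        ext i j'
        by_cases h : j' = j <;> simp [h] }

/-- `M ↦ M.mulVec x` as a continuous linear map. -/
def mulVecCLM (m : ℕ) (x : Fin m → ℂ) : Matrix (Fin m) (Fin m) ℂ →L[ℝ] (Fin m → ℂ) :=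
  LinearMap.toContinuousLinearMap
    { toFun := fun M => M.mulVec x
      map_add' := fun M N => Matrix.add_mulVec M N x
      map_smul' := by
        intro r M
        funext i
        simp [Matrix.mulVec, dotProduct, smul_mul_assoc, Finset.smul_sum, mul_assoc]  }

instance colCLMNorm (m : ℕ) : Norm ((Fin m → ℂ) →L[ℝ] Matrix (Fin m) (Fin m) ℂ) :=
  ContinuousLinearMap.hasOpNorm

lemma colCLM_apply (j : Fin m) (v : Fin m → ℂ) (i j' : Fin m) :
    colCLM m j v i j' = if j' = j then v i else 0 := rfl

lemma nnnorm_colCLM_apply (j : Fin m) (v : Fin m → ℂ) : ‖colCLM m j v‖₊ = ‖v‖₊ := by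
  rw [Matrix.linfty_opNNNorm_def, Pi.nnnorm_def]
  congr 1
  funext i
  have h : ∀ j', ‖colCLM m j v i j'‖₊ = if j' = j then ‖v i‖₊ else 0 := fun j' => by
    rw [colCLM_apply]; split <;> simp
  simp only [h, Finset.sum_ite_eq', Finset.mem_univ, if_true]

lemma norm_colCLM_apply (j : Fin m) (v : Fin m → ℂ) : ‖colCLM m j v‖ = ‖v‖ :=
  congrArg NNReal.toReal (nnnorm_colCLM_apply j v)

lemma norm_colCLM (j : Fin m) : ‖colCLM m j‖ ≤ 1 :=
  ContinuousLinearMap.opNorm_le_bound _ zero_le_one fun v => by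
    rw [one_mul]; exact (norm_colCLM_apply j v).le

lemma mul_colCLM (A : Matrix (Fin m) (Fin m) ℂ) (j : Fin m) (v : Fin m → ℂ) :
    A * (colCLM m j v) = colCLM m j (A.mulVec v) := by
  ext i j'
  by_cases h : j' = j <;>
    simp [colCLM_apply, Matrix.mul_apply, Matrix.mulVec, dotProduct, h, mul_ite]

lemma sum_colCLM_col (M : Matrix (Fin m) (Fin m) ℂ) :
    ∑ j, colCLM m j (M.mulVec (Pi.single j 1)) = M := by
  ext i j'
  have h1 : ∀ j : Fin m, (colCLM m j (M.mulVec (Pi.single j 1))) i j'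
      = if j' = j then M i j else 0 := by
    intro j
    rw [colCLM_apply, Matrix.mulVec_single]
    by_cases h : j' = j <;> simp [h]
  rw [Matrix.sum_apply]
  simp only [h1, Finset.sum_ite_eq, Finset.mem_univ, if_true]

end MatrixTools
/-- `y` solves the differential equation `y' + A y = f` almost everywhere on `[a,b]`. -/
def SolvesODE {m : ℕ} (a b : ℝ) (A : ℝ → Matrix (Fin m) (Fin m) ℂ)
    (f : ℝ → (Fin m → ℂ)) (y : ℝ → (Fin m → ℂ)) : Prop :=
  ∀ᵐ t ∂(volume.restrict (Icc a b)),
    HasDerivWithinAt y (f t - (A t).mulVec (y t)) (Icc a b) t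

/-- `B` is a linear map on functions, bounded with respect to the `W^n_∞` norm. -/
def BoundedLinearB {m : ℕ} (n : ℕ) (a b : ℝ)
    (B : (ℝ → (Fin m → ℂ)) → (Fin m → ℂ)) : Prop :=
  (∀ y z : ℝ → (Fin m → ℂ), B (y + z) = B y + B z) ∧
  (∀ (r : ℂ) (y : ℝ → (Fin m → ℂ)), B (r • y) = r • B y) ∧
  ∃ C : ℝ, ∀ y, MemW n a b y → ‖B y‖ ≤ C * WNorm n a b y

/-- `y` is a solution of the boundary-value problem `y' + A y = f` a.e. on `[a,b]`,
`B y = c`, belonging to `W^n_∞([a,b];ℂ^m)`. -/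
def IsBVPSol {m : ℕ} (n : ℕ) (a b : ℝ) (A : ℝ → Matrix (Fin m) (Fin m) ℂ)
    (B : (ℝ → (Fin m → ℂ)) → (Fin m → ℂ)) (f : ℝ → (Fin m → ℂ)) (c : Fin m → ℂ)
    (y : ℝ → (Fin m → ℂ)) : Prop :=
  MemW n a b y ∧ SolvesODE a b A f y ∧ B y = c

/-- The boundary-value problem `y' + A y = f`, `B y = c` has, for every right-hand side
`(f, c)`, a solution in `W^n_∞`, unique up to values on `[a,b]`. -/
def UniquelySolvable {m : ℕ} (n : ℕ) (a b : ℝ) (A : ℝ → Matrix (Fin m) (Fin m) ℂ)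
    (B : (ℝ → (Fin m → ℂ)) → (Fin m → ℂ)) : Prop :=
  ∀ f : ℝ → (Fin m → ℂ), MemW (n-1) a b f → ∀ c : Fin m → ℂ,
    (∃ y, IsBVPSol n a b A B f c y) ∧
    (∀ y z, IsBVPSol n a b A B f c y → IsBVPSol n a b A B f c z →
      ∀ t ∈ Icc a b, y t = z t)

/-- Condition (0): the homogeneous limit problem has only the trivial solution. -/
def CondZero {m : ℕ} (n : ℕ) (a b : ℝ) (A : ℝ → Matrix (Fin m) (Fin m) ℂ)
    (B : (ℝ → (Fin m → ℂ)) → (Fin m → ℂ)) : Prop :=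
  ∀ y, IsBVPSol n a b A B 0 0 y → ∀ t ∈ Icc a b, y t = 0

/-- Condition (I): `‖A(·;ε) − A(·;0)‖_{n−1,∞} → 0` as `ε → 0+`. -/
def CondI {m : ℕ} (n : ℕ) (a b : ℝ) (A : ℝ → ℝ → Matrix (Fin m) (Fin m) ℂ) : Prop :=
  Tendsto (fun ε => WNorm (n-1) a b (fun t => A ε t - A 0 t)) (𝓝[>] (0:ℝ)) (𝓝 0)

/-- Condition (II): `B(ε)y → B(0)y` as `ε → 0+`, for every `y ∈ W^n_∞`. -/
def CondII {m : ℕ} (n : ℕ) (a b : ℝ)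
    (B : ℝ → (ℝ → (Fin m → ℂ)) → (Fin m → ℂ)) : Prop :=
  ∀ y, MemW n a b y → Tendsto (fun ε => B ε y) (𝓝[>] (0:ℝ)) (𝓝 (B 0 y))

/-- Continuous dependence of the solutions of the boundary-value problems on the
parameter `ε` at `ε = 0`: conditions (∗) and (∗∗). -/
def ContDep {m : ℕ} (n : ℕ) (a b ε₀ : ℝ)
    (A : ℝ → ℝ → Matrix (Fin m) (Fin m) ℂ)
    (B : ℝ → (ℝ → (Fin m → ℂ)) → (Fin m → ℂ)) : Prop :=
  ∃ ε₁ : ℝ, 0 < ε₁ ∧ ε₁ < ε₀ ∧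
    (∀ ε ∈ Ico (0:ℝ) ε₁, UniquelySolvable n a b (A ε) (B ε)) ∧
    (∀ (f : ℝ → ℝ → (Fin m → ℂ)) (c : ℝ → (Fin m → ℂ)) (y : ℝ → ℝ → (Fin m → ℂ)),
      (∀ ε ∈ Ico (0:ℝ) ε₁, MemW (n-1) a b (f ε)) →
      Tendsto (fun ε => WNorm (n-1) a b (fun t => f ε t - f 0 t)) (𝓝[>] (0:ℝ)) (𝓝 0) →
      Tendsto c (𝓝[>] (0:ℝ)) (𝓝 (c 0)) →
      (∀ ε ∈ Ico (0:ℝ) ε₁, IsBVPSol n a b (A ε) (B ε) (f ε) (c ε) (y ε)) →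
      Tendsto (fun ε => WNorm n a b (fun t => y ε t - y 0 t)) (𝓝[>] (0:ℝ)) (𝓝 0))


section MainProof
attribute [local instance] Matrix.linftyOpNormedRing Matrix.linftyOpNormedAlgebra

/-- Construction of test solutions and the key matrix `Z`, together with its properties. -/
lemma main_construction (m n0 : ℕ) (a b : ℝ) (hab : a < b)
    (ε₀ : ℝ) (hε₀ : 0 < ε₀)
    (A : ℝ → ℝ → Matrix (Fin m) (Fin m) ℂ)
    (B : ℝ → (ℝ → (Fin m → ℂ)) → (Fin m → ℂ))
    (hA : ∀ ε ∈ Ico (0:ℝ) ε₀, MemW n0 a b (A ε))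
    (ε₁ : ℝ) (hε₁0 : 0 < ε₁) (hε₁ε₀ : ε₁ < ε₀)
    (hsolv : ∀ ε ∈ Ico (0:ℝ) ε₁, UniquelySolvable (n0+1) a b (A ε) (B ε))
    (hcont : ∀ (f : ℝ → ℝ → (Fin m → ℂ)) (c : ℝ → (Fin m → ℂ)) (y : ℝ → ℝ → (Fin m → ℂ)),
      (∀ ε ∈ Ico (0:ℝ) ε₁, MemW n0 a b (f ε)) →
      Tendsto (fun ε => WNorm n0 a b (fun t => f ε t - f 0 t)) (𝓝[>] (0:ℝ)) (𝓝 0) →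
      Tendsto c (𝓝[>] (0:ℝ)) (𝓝 (c 0)) →
      (∀ ε ∈ Ico (0:ℝ) ε₁, IsBVPSol (n0+1) a b (A ε) (B ε) (f ε) (c ε) (y ε)) →
      Tendsto (fun ε => WNorm (n0+1) a b (fun t => y ε t - y 0 t)) (𝓝[>] (0:ℝ)) (𝓝 0)) :
    ∃ δ : ℝ → ℝ, (∀ ε, 0 ≤ δ ε) ∧ Tendsto δ (𝓝[>] (0:ℝ)) (𝓝 0) ∧
      ∃ Z : ℝ → ℝ → Matrix (Fin m) (Fin m) ℂ,
        ∀ ε ∈ Ioo (0:ℝ) ε₁,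
          MemW (n0+1) a b (Z ε) ∧ WNorm (n0+1) a b (Z ε) ≤ δ ε ∧
          (∀ᵐ t ∂(volume.restrict (Icc a b)), HasDerivWithinAt (Z ε)
            (-(A ε t - A 0 t) - (A ε t) * (Z ε t)) (Icc a b) t) := by
  classical
  have hbA0 : MemW n0 a b (A 0) := hA 0 ⟨le_refl 0, hε₀⟩
  set e : Fin m → (Fin m → ℂ) := fun j => Pi.single j 1 with he
  set fj : Fin m → ℝ → (Fin m → ℂ) := fun j t => (A 0 t).mulVec (e j) with hfj
  have hfmem : ∀ j, MemW n0 a b (fj j) := by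
    intro j
    cases n0 with
    | zero =>
      obtain ⟨hmeas, C, hC⟩ := hbA0
      have hC0 : 0 ≤ C := le_trans (norm_nonneg _) (hC a ⟨le_refl a, hab.le⟩)
      constructor
      · exact (mulVecCLM m (e j)).continuous.comp_aestronglyMeasurable hmeas
      · refine ⟨C * ‖e j‖, fun t ht => ?_⟩
        exact (Matrix.linfty_opNorm_mulVec _ _).trans
          (mul_le_mul_of_nonneg_right (hC t ht) (norm_nonneg _))
    | succ k =>
      exact memW_clm hab (mulVecCLM m (e j)) hbA0
  set c : Fin m → (Fin m → ℂ) := fun j => B 0 (fun _ => e j) with hc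
  have hsolv' : ∀ (j : Fin m) (ε : ℝ), ε ∈ Ioo (0:ℝ) ε₁ →
      ∃ y, IsBVPSol (n0+1) a b (A ε) (B ε) (fj j) (c j) y :=
    fun j ε hε => (hsolv ε ⟨hε.1.le, hε.2⟩ (fj j) (by simpa using hfmem j) (c j)).1
  set Y : Fin m → ℝ → ℝ → (Fin m → ℂ) := fun j ε =>
    if hε : ε ∈ Ioo (0:ℝ) ε₁ then (hsolv' j ε hε).choose else (fun _ => e j) with hY
  have hY0 : ∀ j, Y j 0 = fun _ => e j := fun j => dif_neg (by simp)
  have hconstSol : ∀ j, IsBVPSol (n0+1) a b (A 0) (B 0) (fj j) (c j) (fun _ => e j) := by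
    intro j
    refine ⟨memW_const hab n0 (e j), ?_, rfl⟩
    refine Filter.Eventually.of_forall fun t => ?_
    have hz : fj j t - (A 0 t).mulVec (e j) = 0 := sub_self _
    rw [hz]
    exact hasDerivWithinAt_const t (Icc a b) (e j)
  have hYsol : ∀ j, ∀ ε ∈ Ico (0:ℝ) ε₁,
      IsBVPSol (n0+1) a b (A ε) (B ε) (fj j) (c j) (Y j ε) := by
    intro j ε hε
    rcases eq_or_lt_of_le hε.1 with heq | hpos
    · rw [← heq, hY0 j]
      exact hconstSol j
    · have hεI : ε ∈ Ioo (0:ℝ) ε₁ := ⟨hpos, hε.2⟩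
      simpa only [Y, dif_pos hεI] using (hsolv' j ε hεI).choose_spec
  have hconv : ∀ j, Tendsto (fun ε => WNorm (n0+1) a b (fun t => Y j ε t - Y j 0 t))
      (𝓝[>] (0:ℝ)) (𝓝 0) := by
    intro j
    refine hcont (fun _ => fj j) (fun _ => c j) (Y j) (fun ε _ => hfmem j) ?_
      tendsto_const_nhds (hYsol j)
    have hzz : (fun ε : ℝ => WNorm n0 a b (fun t => fj j t - fj j t)) = fun _ => 0 := by
      funext ε
      rw [show (fun t => fj j t - fj j t) = (fun _ => (0 : Fin m → ℂ)) from
        funext fun t => sub_self _]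
      exact wNorm_zero_eq hab n0
    rw [hzz]
    exact tendsto_const_nhds
  refine ⟨fun ε => ∑ j, WNorm (n0+1) a b (fun t => Y j ε t - Y j 0 t),
    fun ε => Finset.sum_nonneg fun j _ => wNorm_succ_nonneg _ _, ?_, ?_⟩
  · have := tendsto_finset_sum (Finset.univ : Finset (Fin m)) (fun j _ => hconv j)
    simpa using this
  refine ⟨fun ε t => ∑ j, colCLM m j (Y j ε t - Y j 0 t), fun ε hε => ?_⟩
  have hεIco : ε ∈ Ico (0:ℝ) ε₁ := ⟨hε.1.le, hε.2⟩
  have hzmem : ∀ j, MemW (n0+1) a b (fun t => Y j ε t - Y j 0 t) := fun j =>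
    memW_sub hab ((hYsol j ε hεIco).1) ((hYsol j 0 ⟨le_refl 0, hε₁0⟩).1)
  have hZmem : MemW (n0+1) a b (fun t => ∑ j, colCLM m j (Y j ε t - Y j 0 t)) :=
    memW_fsum hab Finset.univ _ fun j _ => memW_clm hab (colCLM m j) (hzmem j)
  refine ⟨hZmem, ?_, ?_⟩
  · refine (wNorm_fsum_le hab Finset.univ _ fun j _ =>
      memW_clm hab (colCLM m j) (hzmem j)).trans (Finset.sum_le_sum fun j _ => ?_)
    refine (wNorm_clm_le hab (colCLM m j) (hzmem j)).trans ?_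
    calc ‖colCLM m j‖ * WNorm (n0+1) a b (fun t => Y j ε t - Y j 0 t)
        ≤ 1 * WNorm (n0+1) a b (fun t => Y j ε t - Y j 0 t) :=
          mul_le_mul_of_nonneg_right (norm_colCLM j) (wNorm_succ_nonneg _ _)
      _ = _ := one_mul _
  · -- the a.e. differential equation for Z
    have hae1 : ∀ᵐ t ∂(volume.restrict (Icc a b)), ∀ j : Fin m,
        HasDerivWithinAt (Y j ε) (fj j t - (A ε t).mulVec (Y j ε t)) (Icc a b) t :=
      (MeasureTheory.ae_all_iff).mpr fun j => (hYsol j ε hεIco).2.1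
    filter_upwards [hae1] with t ht
    have hcol : ∀ j : Fin m, HasDerivWithinAt (fun u => colCLM m j (Y j ε u - Y j 0 u))
        (colCLM m j (fj j t - (A ε t).mulVec (Y j ε t))) (Icc a b) t := by
      intro j
      have hder : HasDerivWithinAt (fun u => Y j ε u - Y j 0 u)
          (fj j t - (A ε t).mulVec (Y j ε t)) (Icc a b) t := by
        have h0 : HasDerivWithinAt (Y j 0) (0 : Fin m → ℂ) (Icc a b) t := by
          rw [hY0 j]; exact hasDerivWithinAt_const t (Icc a b) (e j)
        have := (ht j).sub h0; rw [sub_zero] at this; exact this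
      exact ((colCLM m j).hasFDerivAt.comp_hasDerivWithinAt t hder)
    have hsum := HasDerivWithinAt.sum (u := Finset.univ)
      (fun j _ => hcol j)
    convert hsum using 1
    case e'_4 => rfl
    case e'_5 => rfl
    case e'_6 => rfl
    case e'_8 => funext u; rw [Finset.sum_apply]
    -- identify the derivative value
    have hexp : ∀ j : Fin m, colCLM m j (fj j t - (A ε t).mulVec (Y j ε t))
        = colCLM m j ((A 0 t).mulVec (e j)) - colCLM m j ((A ε t).mulVec (e j))
          - colCLM m j ((A ε t).mulVec (Y j ε t - Y j 0 t)) := by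
      intro j
      rw [← map_sub, ← map_sub]
      congr 1
      rw [hY0 j]
      show fj j t - (A ε t).mulVec (Y j ε t)
        = (A 0 t).mulVec (e j) - (A ε t).mulVec (e j) - (A ε t).mulVec (Y j ε t - e j)
      rw [Matrix.mulVec_sub]
      abel
    rw [show (∑ j, colCLM m j (fj j t - (A ε t).mulVec (Y j ε t)))
        = (∑ j, colCLM m j ((A 0 t).mulVec (e j)))
          - (∑ j, colCLM m j ((A ε t).mulVec (e j)))
          - (∑ j, colCLM m j ((A ε t).mulVec (Y j ε t - Y j 0 t))) from by
      rw [← Finset.sum_sub_distrib, ← Finset.sum_sub_distrib]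
      exact Finset.sum_congr rfl fun j _ => hexp j]
    rw [sum_colCLM_col (A 0 t), sum_colCLM_col (A ε t)]
    rw [show (∑ j, colCLM m j ((A ε t).mulVec (Y j ε t - Y j 0 t)))
        = (A ε t) * (∑ j, colCLM m j (Y j ε t - Y j 0 t)) from by
      rw [Finset.mul_sum]
      exact Finset.sum_congr rfl fun j _ => (mul_colCLM (A ε t) j _).symm]
    abel

end MainProof
attribute [local instance] Matrix.linftyOpNormedRing Matrix.linftyOpNormedAlgebra

lemma final_arith {x wz wzp CA d p P1 P2 : ℝ} (hx0 : 0 ≤ x) (hwz0 : 0 ≤ wz)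
    (hCA0 : 0 ≤ CA) (hd0 : 0 ≤ d) (hp : 1 ≤ p)
    (hchain : x ≤ wzp + P1 + P2) (hP1 : P1 ≤ p*(CA*wz)) (hP2 : P2 ≤ p*(x*wz))
    (hWZ : wz ≤ d) (hWZ' : wzp ≤ d) (hsmall : p*d < 1/2) : x ≤ 2*(1+p*CA)*d := by
  have hp0 : 0 ≤ p := le_trans zero_le_one hp
  have hq1 : p*(CA*wz) ≤ p*(CA*d) :=
    mul_le_mul_of_nonneg_left (mul_le_mul_of_nonneg_left hWZ hCA0) hp0
  have hq2 : p*(x*wz) ≤ (p*d)*x := by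
    calc p*(x*wz) ≤ p*(x*d) :=
          mul_le_mul_of_nonneg_left (mul_le_mul_of_nonneg_left hWZ hx0) hp0
      _ = (p*d)*x := by ring
  have hq3 : (p*d)*x ≤ (1/2)*x := mul_le_mul_of_nonneg_right hsmall.le hx0
  nlinarith

/-- Step 1 of the proof of Theorem 1. If the solutions of BVP(ε)
depend continuously on `ε` at `ε = 0`, then condition (I) holds:
`‖A(·;ε) − A(·;0)‖_{n−1,∞} → 0` as `ε → 0+`. -/
theorem continuous_dependence_implies_condI
    (m n : ℕ) (hm : 1 ≤ m) (hn : 1 ≤ n) (a b : ℝ) (hab : a < b)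
    (ε₀ : ℝ) (hε₀ : 0 < ε₀)
    (A : ℝ → ℝ → Matrix (Fin m) (Fin m) ℂ)
    (B : ℝ → (ℝ → (Fin m → ℂ)) → (Fin m → ℂ))
    (hA : ∀ ε ∈ Ico (0:ℝ) ε₀, MemW (n-1) a b (A ε))
    (hB : ∀ ε ∈ Ico (0:ℝ) ε₀, BoundedLinearB n a b (B ε))
    (h : ContDep n a b ε₀ A B) :
    CondI n a b A := by
  classical
  obtain ⟨n0, rfl⟩ : ∃ n0, n = n0 + 1 := ⟨n - 1, (Nat.succ_pred_eq_of_pos hn).symm⟩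
  obtain ⟨ε₁, hε₁0, hε₁ε₀, hsolv, hcont⟩ := h
  have hA' : ∀ ε ∈ Ico (0:ℝ) ε₀, MemW n0 a b (A ε) := hA
  obtain ⟨δ, hδ0, hδ, Z, hZ⟩ := main_construction m n0 a b hab ε₀ hε₀ A B hA' ε₁ hε₁0
    hε₁ε₀ hsolv hcont
  have hev1 : Ioo (0:ℝ) ε₁ ∈ 𝓝[>] (0:ℝ) :=
    Ioo_mem_nhdsGT_of_mem ⟨le_refl (0:ℝ), hε₁0⟩
  cases n0 with
  | zero =>
    obtain ⟨hmeas, C, hC⟩ := hA' 0 ⟨le_refl 0, hε₀⟩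
    set K := max C 0 with hKdef
    have hK0 : 0 ≤ K := le_max_right _ _
    have hK : ∀ t ∈ Icc a b, ‖A 0 t‖ ≤ K := fun t ht => (hC t ht).trans (le_max_left _ _)
    show Tendsto (fun ε => WNorm 0 a b (fun t => A ε t - A 0 t)) (𝓝[>] (0:ℝ)) (𝓝 0)
    refine squeeze_zero' (Filter.Eventually.of_forall fun ε => wNorm_nonneg 0 _) ?_
      (g := fun ε => 2*(1+K)*δ ε) (by simpa using hδ.const_mul (2*(1+K)))
    have hev2 : ∀ᶠ ε in 𝓝[>] (0:ℝ), δ ε < 1/2 :=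
      hδ.eventually_lt_const (by norm_num)
    filter_upwards [hev1, hev2] with ε hεI hεsmall
    obtain ⟨hZmem, hZnorm, hODE⟩ := hZ ε hεI
    have hZc : ContinuousOn (Z ε) (Icc a b) := hZmem.1.continuousOn
    have hbddZ : ∃ C', ∀ t ∈ Icc a b, ‖Z ε t‖ ≤ C' :=
      isCompact_Icc.exists_bound_of_continuousOn hZc
    have hW1 : WNorm 1 a b (Z ε) = supNormOn a b (Z ε) + lipConstOn a b (Z ε) := wNorm_one_eq
    have hsupnn : 0 ≤ supNormOn a b (Z ε) := supNormOn_nonneg _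
    have hlipnn : 0 ≤ lipConstOn a b (Z ε) := lipConstOn_nonneg _
    have hsupZ : ∀ t ∈ Icc a b, ‖Z ε t‖ ≤ δ ε := fun t ht =>
      (norm_le_supNormOn hbddZ ht).trans (by linarith)
    have hne : ∃ K' : ℝ≥0, LipschitzOnWith K' (Z ε) (Icc a b) := by
      obtain ⟨_, K', hK'⟩ := hZmem
      rw [iteratedDerivWithin_zero] at hK'
      exact ⟨K', hK'⟩
    have hlipZ : ∀ x ∈ Icc a b, ∀ y ∈ Icc a b, ‖Z ε x - Z ε y‖ ≤ δ ε * |x - y| := by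
      intro x hx y hy
      refine (norm_sub_le_lipConstOn hne hx hy).trans
        (mul_le_mul_of_nonneg_right (by linarith) (abs_nonneg _))
    have haebound : ∀ᵐ t ∂(volume.restrict (Icc a b)),
        ‖A ε t - A 0 t‖ ≤ 2*(1+K)*δ ε := by
      filter_upwards [hODE, ae_restrict_mem measurableSet_Icc] with t hd ht
      have h1 : ‖-(A ε t - A 0 t) - A ε t * Z ε t‖ ≤ δ ε :=
        norm_deriv_le_of_lipBound hab ht hd hlipZ
      have h2 : ‖A ε t‖ ≤ K + ‖A ε t - A 0 t‖ := by
        have e2 : A ε t = A 0 t + (A ε t - A 0 t) := by abel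
        calc ‖A ε t‖ = ‖A 0 t + (A ε t - A 0 t)‖ := by rw [← e2]
          _ ≤ ‖A 0 t‖ + ‖A ε t - A 0 t‖ := norm_add_le _ _
          _ ≤ K + ‖A ε t - A 0 t‖ := add_le_add_left (hK t ht) _
      have h3 : ‖A ε t - A 0 t‖ ≤ δ ε + (K + ‖A ε t - A 0 t‖) * δ ε := by
        have e3 : A ε t - A 0 t
            = -(-(A ε t - A 0 t) - A ε t * Z ε t) - A ε t * Z ε t := by abel
        calc ‖A ε t - A 0 t‖
            = ‖-(-(A ε t - A 0 t) - A ε t * Z ε t) - A ε t * Z ε t‖ := by rw [← e3]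
          _ ≤ ‖-(-(A ε t - A 0 t) - A ε t * Z ε t)‖ + ‖A ε t * Z ε t‖ := norm_sub_le _ _
          _ = ‖-(A ε t - A 0 t) - A ε t * Z ε t‖ + ‖A ε t * Z ε t‖ := by rw [norm_neg]
          _ ≤ δ ε + ‖A ε t‖ * ‖Z ε t‖ :=
              add_le_add h1 (Matrix.linfty_opNorm_mul _ _)
          _ ≤ δ ε + (K + ‖A ε t - A 0 t‖) * δ ε := by
              refine add_le_add_right (mul_le_mul h2 (hsupZ t ht) (norm_nonneg _) ?_) _
              positivity
      nlinarith [norm_nonneg (A ε t - A 0 t), hδ0 ε]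
    show WNorm 0 a b (fun t => A ε t - A 0 t) ≤ 2*(1+K)*δ ε
    have h5 : eLpNorm (fun t => A ε t - A 0 t) ⊤ (volume.restrict (Icc a b))
        ≤ ENNReal.ofReal (2*(1+K)*δ ε) := by
      simpa using eLpNorm_le_of_ae_bound (p := (⊤ : ENNReal)) haebound
    exact ENNReal.toReal_le_of_le_ofReal
      (mul_nonneg (mul_nonneg (by norm_num) (by linarith)) (hδ0 ε)) h5
  | succ k =>
    have hbA0 : MemW (k+1) a b (A 0) := hA' 0 ⟨le_refl 0, hε₀⟩
    set CA := WNorm (k+1) a b (A 0) with hCAdef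
    have hCA0 : 0 ≤ CA := wNorm_succ_nonneg _ _
    show Tendsto (fun ε => WNorm (k+1) a b (fun t => A ε t - A 0 t)) (𝓝[>] (0:ℝ)) (𝓝 0)
    refine squeeze_zero' (Filter.Eventually.of_forall fun ε => wNorm_succ_nonneg _ _) ?_
      (g := fun ε => 2*(1+2^k*CA)*δ ε) (by simpa using hδ.const_mul (2*(1+2^k*CA)))
    have hev2 : ∀ᶠ ε in 𝓝[>] (0:ℝ), 2^k * δ ε < 1/2 := by
      have h2 : Tendsto (fun ε => (2:ℝ)^k * δ ε) (𝓝[>] (0:ℝ)) (𝓝 0) := by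
        simpa using hδ.const_mul ((2:ℝ)^k)
      exact h2.eventually_lt_const (by norm_num)
    filter_upwards [hev1, hev2] with ε hεI hεsmall
    obtain ⟨hZmem, hZnorm, hODE⟩ := hZ ε hεI
    have hAεmem : MemW (k+1) a b (A ε) := hA' ε ⟨hεI.1.le, hεI.2.trans hε₁ε₀⟩
    have hMmem : MemW (k+1) a b (fun t => A ε t - A 0 t) := memW_sub hab hAεmem hbA0
    -- continuity of both sides of the a.e. identity
    have hZ'c : ContinuousOn (derivWithin (Z ε) (Icc a b)) (Icc a b) :=
      (hZmem.1.derivWithin (usIcc hab) (le_refl ((k:WithTop ℕ∞)+1))).continuousOn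
    have hAεc : ContinuousOn (A ε) (Icc a b) := hAεmem.1.continuousOn
    have hA0c : ContinuousOn (A 0) (Icc a b) := hbA0.1.continuousOn
    have hZc : ContinuousOn (Z ε) (Icc a b) := hZmem.1.continuousOn
    have hRHSc : ContinuousOn (fun t => -(A ε t - A 0 t) - A ε t * Z ε t) (Icc a b) :=
      ((hAεc.sub hA0c).neg).sub (hAεc.mul hZc)
    have haeD : ∀ᵐ t ∂(volume.restrict (Icc a b)),
        derivWithin (Z ε) (Icc a b) t = -(A ε t - A 0 t) - A ε t * Z ε t := by
      filter_upwards [hODE, ae_restrict_mem measurableSet_Icc] with t hd ht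
      exact hd.derivWithin (usIcc hab t ht)
    have hEq1 : EqOn (derivWithin (Z ε) (Icc a b))
        (fun t => -(A ε t - A 0 t) - A ε t * Z ε t) (Icc a b) :=
      eqOn_of_ae_eq hab hZ'c hRHSc haeD
    have hEq2 : EqOn (fun t => A ε t - A 0 t)
        (fun t => -(derivWithin (Z ε) (Icc a b) t) - A 0 t * Z ε t
          - (A ε t - A 0 t) * Z ε t) (Icc a b) := by
      intro t ht
      show A ε t - A 0 t = -(derivWithin (Z ε) (Icc a b) t) - A 0 t * Z ε t
          - (A ε t - A 0 t) * Z ε t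
      rw [hEq1 ht]
      noncomm_ring
    have hZ'mem := memW_derivWithin hab hZmem
    have hZm := memW_of_succ hab hZmem
    have hWZ : WNorm (k+1) a b (Z ε) ≤ δ ε := (wNorm_mono hab hZmem).trans hZnorm
    have hWZ' : WNorm (k+1) a b (derivWithin (Z ε) (Icc a b)) ≤ δ ε :=
      (wNorm_derivWithin_le hab).trans hZnorm
    obtain ⟨hP1mem, hP1⟩ := memW_mul_wNorm hab k hbA0 hZm
    obtain ⟨hP2mem, hP2⟩ := memW_mul_wNorm hab k hMmem hZm
    have hT1mem : MemW (k+1) a b (fun t => -(derivWithin (Z ε) (Icc a b) t) - A 0 t * Z ε t) :=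
      memW_sub hab (memW_neg hab hZ'mem) hP1mem
    have hchain : WNorm (k+1) a b (fun t => A ε t - A 0 t) ≤
        WNorm (k+1) a b (derivWithin (Z ε) (Icc a b))
        + WNorm (k+1) a b (fun t => A 0 t * Z ε t)
        + WNorm (k+1) a b (fun t => (A ε t - A 0 t) * Z ε t) := by
      calc WNorm (k+1) a b (fun t => A ε t - A 0 t)
          = WNorm (k+1) a b (fun t => -(derivWithin (Z ε) (Icc a b) t) - A 0 t * Z ε t
              - (A ε t - A 0 t) * Z ε t) := wNorm_congr hab hEq2
        _ ≤ WNorm (k+1) a b (fun t => -(derivWithin (Z ε) (Icc a b) t) - A 0 t * Z ε t)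
            + WNorm (k+1) a b (fun t => (A ε t - A 0 t) * Z ε t) :=
            wNorm_sub_le hab hT1mem hP2mem
        _ ≤ (WNorm (k+1) a b (fun t => -(derivWithin (Z ε) (Icc a b) t))
            + WNorm (k+1) a b (fun t => A 0 t * Z ε t))
            + WNorm (k+1) a b (fun t => (A ε t - A 0 t) * Z ε t) :=
            add_le_add_left (wNorm_sub_le hab (memW_neg hab hZ'mem) hP1mem) _
        _ = WNorm (k+1) a b (derivWithin (Z ε) (Icc a b))
            + WNorm (k+1) a b (fun t => A 0 t * Z ε t)
            + WNorm (k+1) a b (fun t => (A ε t - A 0 t) * Z ε t) := by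
            rw [wNorm_neg hab]
    exact final_arith (wNorm_succ_nonneg _ _) (wNorm_succ_nonneg _ _) hCA0 (hδ0 ε)
      (one_le_pow₀ one_le_two) hchain hP1 hP2 hWZ hWZ' hεsmall

end
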